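/- Let U be a real n×k matrix, S a real m×n matrix, and α, β, D ≥ 1 and ε > 0 real numbers with ε·α·β·k·D ≤ 1/4. Assume: (a) ‖Ux‖₁ ≤ α‖x‖₁ for all x ∈ ℝᵏ; (b) ‖Ux‖₁ ≥ ‖x‖₁/(βk) for all x ∈ ℝᵏ; (c) N is a subset of {z ∈ ℝᵏ : ‖z‖₁ = 1} such that for every z with ‖z‖₁ = 1 there exists y ∈ N with ‖y − z‖₁ ≤ ε; (d) ‖SUy‖₁ ≥ ‖Uy‖₁ for every y ∈ N; (e) ‖SUx‖₁ ≤ D·‖Ux‖₁ for all x ∈ ℝᵏ. Then ‖SUw‖₁ ≥ (1/2)·‖Uw‖₁ for all w ∈ ℝᵏ. -/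

import Mathlib

open Matrix

/-- The `ℓ₁` norm of a vector. -/
noncomputable def l1V {n : ℕ} (v : Fin n → ℝ) : ℝ :=
  ∑ i, |v i|

lemma l1V_nonneg {n : ℕ} (v : Fin n → ℝ) : 0 ≤ l1V v :=
  Finset.sum_nonneg fun _ _ => abs_nonneg _

lemma l1V_smul {n : ℕ} (c : ℝ) (v : Fin n → ℝ) : l1V (c • v) = |c| * l1V v := by
  simp [l1V, abs_mul, Finset.mul_sum]

lemma l1V_add_le {n : ℕ} (u v : Fin n → ℝ) : l1V (u + v) ≤ l1V u + l1V v := by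
  classical
  have : ∑ i, |(u + v) i| ≤ ∑ i, (|u i| + |v i|) :=
    Finset.sum_le_sum fun i _ => abs_add_le (u i) (v i)
  simpa [l1V, Finset.sum_add_distrib] using this

lemma l1V_neg {n : ℕ} (v : Fin n → ℝ) : l1V (-v) = l1V v := by
  simp [l1V]

lemma l1V_sub_le {n : ℕ} (u v : Fin n → ℝ) : l1V u ≤ l1V v + l1V (u - v) := by
  have := l1V_add_le v (u - v)
  simpa using this

/-- Net argument: suppose `U` is an `(α, β)` `ℓ₁` well-conditioned basis, `N` is an `ε`-net of
the `ℓ₁` unit sphere on which `S` does not contract vectors `Uy`, and `S` dilates every `Ux` by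
at most `D`; if `ε·α·β·k·D ≤ 1/4`, then `‖SUw‖₁ ≥ ‖Uw‖₁ / 2` for all `w`. -/
theorem net_argument_no_contraction {n k m : ℕ}
    (U : Matrix (Fin n) (Fin k) ℝ) (S : Matrix (Fin m) (Fin n) ℝ)
    (α β D ε : ℝ) (hα : 1 ≤ α) (hβ : 1 ≤ β) (hD : 1 ≤ D) (hε : 0 < ε)
    (hsmall : ε * α * β * k * D ≤ 1 / 4)
    (ha : ∀ x : Fin k → ℝ, l1V (U.mulVec x) ≤ α * l1V x)
    (hb : ∀ x : Fin k → ℝ, l1V x / (β * k) ≤ l1V (U.mulVec x))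
    (Nset : Set (Fin k → ℝ)) (hNsub : Nset ⊆ {z : Fin k → ℝ | l1V z = 1})
    (hNnet : ∀ z : Fin k → ℝ, l1V z = 1 → ∃ y ∈ Nset, l1V (y - z) ≤ ε)
    (hd : ∀ y ∈ Nset, l1V (U.mulVec y) ≤ l1V (S.mulVec (U.mulVec y)))
    (he : ∀ x : Fin k → ℝ, l1V (S.mulVec (U.mulVec x)) ≤ D * l1V (U.mulVec x)) :
    ∀ w : Fin k → ℝ, (1 / 2) * l1V (U.mulVec w) ≤ l1V (S.mulVec (U.mulVec w)) := by
  intro w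
  set c := l1V w with hc
  rcases eq_or_lt_of_le (l1V_nonneg w) with h0 | hcpos
  · -- l1V w = 0, so l1V (U w) = 0
    have hUw : l1V (U.mulVec w) = 0 := by
      have h1 := ha w
      have h2 := l1V_nonneg (U.mulVec w)
      nlinarith
    rw [hUw]
    simpa using l1V_nonneg (S.mulVec (U.mulVec w))
  · -- k > 0 since l1V w > 0
    have hk : 0 < (k : ℝ) := by
      rcases Nat.eq_zero_or_pos k with hk0 | hk0
      · exfalso; subst hk0
        simp [l1V] at hc
        exact absurd hc.symm (ne_of_gt hcpos)
      · exact_mod_cast hk0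
    set z : Fin k → ℝ := c⁻¹ • w with hzdef
    have hz1 : l1V z = 1 := by
      rw [hzdef, l1V_smul, abs_of_pos (inv_pos.mpr hcpos), ← hc]
      field_simp
      exact div_self (ne_of_gt hcpos)
    obtain ⟨y, hyN, hynear⟩ := hNnet z hz1
    -- decomposition facts
    have hy : y = z + (y - z) := by abel
    have hdec : U.mulVec y = U.mulVec z + U.mulVec (y - z) := by
      conv_lhs => rw [hy]
      rw [Matrix.mulVec_add]
    have hdecS : S.mulVec (U.mulVec y)
        = S.mulVec (U.mulVec z) + S.mulVec (U.mulVec (y - z)) := by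
      rw [hdec, Matrix.mulVec_add]
    have h1 : l1V (U.mulVec y) ≤ l1V (S.mulVec (U.mulVec y)) := hd y hyN
    have h2 : l1V (S.mulVec (U.mulVec y)) ≤
        l1V (S.mulVec (U.mulVec z)) + l1V (S.mulVec (U.mulVec (y - z))) := by
      rw [hdecS]; exact l1V_add_le _ _
    have h3 : l1V (S.mulVec (U.mulVec (y - z))) ≤ D * l1V (U.mulVec (y - z)) := he _
    have h4 : l1V (U.mulVec (y - z)) ≤ α * ε := by
      have := ha (y - z)
      nlinarith [l1V_nonneg (y - z)]
    have h5 : l1V (U.mulVec z) ≤ l1V (U.mulVec y) + l1V (U.mulVec (y - z)) := by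
      have h := l1V_sub_le (U.mulVec z) (U.mulVec y)
      have hneg : U.mulVec z - U.mulVec y = -(U.mulVec (y - z)) := by
        rw [Matrix.mulVec_sub]; abel
      rw [hneg, l1V_neg] at h
      linarith
    have h6 : 1 / (β * k) ≤ l1V (U.mulVec z) := by
      have := hb z
      rwa [hz1] at this
    have hβk : 0 < β * k := by positivity
    -- main inequality for z
    have hz : (1 / 2) * l1V (U.mulVec z) ≤ l1V (S.mulVec (U.mulVec z)) := by
      have key : (1 + D) * (α * ε) ≤ 1 / (2 * (β * k)) := by
        rw [le_div_iff₀ (by positivity)]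
        nlinarith [mul_pos (mul_pos (mul_pos hε (show (0:ℝ) < α by linarith))
          (show (0:ℝ) < β by linarith)) hk]
      have h7 : 1 / (2 * (β * k)) ≤ (1 / 2) * l1V (U.mulVec z) := by
        rw [div_le_iff₀ (by positivity)] at h6 ⊢
        nlinarith
      nlinarith [l1V_nonneg (U.mulVec (y - z)), h4, h3, h2, h1, h5]
    -- scale back to w
    have hw : w = c • z := by
      rw [hzdef, smul_smul, mul_inv_cancel₀ (ne_of_gt hcpos), one_smul]
    have hUw : l1V (U.mulVec w) = c * l1V (U.mulVec z) := by
      rw [hw, Matrix.mulVec_smul, l1V_smul, abs_of_pos hcpos]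
    have hSUw : l1V (S.mulVec (U.mulVec w)) = c * l1V (S.mulVec (U.mulVec z)) := by
      rw [hw, Matrix.mulVec_smul, Matrix.mulVec_smul, l1V_smul, abs_of_pos hcpos]
    rw [hUw, hSUw]
    nlinarith
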